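/- Let d ≥ 1, β ∈ (0,1], L > 0, let I be an arbitrary index set, let {x_i}_{i∈I} ⊂ ℝ^d, and let f : ℝ^d → ℝ and {g_i : ℝ^d → ℝ}_{i∈I} be functions such that f = g_i on the open ball B(x_i, 20√d·L) for every i ∈ I and such that the support of f is contained in ⋃_{i∈I} B(x_i, 10√d·L). If S ≥ 0 satisfies |g_i|_{L,β} ≤ S for every i ∈ I, then |f|_{L,β} ≤ 3S. -/

import Mathlib

/-- The supremum of the absolute value of `f`. -/
noncomputable def supAbs {d : ℕ} (f : EuclideanSpace ℝ (Fin d) → ℝ) : ℝ :=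
  ⨆ x, |f x|

/-- The scaled `β`-Hölder seminorm:
`sup_{x ≠ y} |f x - f y| / ‖x - y‖ ^ β`. -/
noncomputable def holderSemi {d : ℕ} (β : ℝ) (f : EuclideanSpace ℝ (Fin d) → ℝ) : ℝ :=
  ⨆ p : {p : EuclideanSpace ℝ (Fin d) × EuclideanSpace ℝ (Fin d) // p.1 ≠ p.2},
    |f p.1.1 - f p.1.2| / ‖p.1.1 - p.1.2‖ ^ β

/-- The scaled Hölder norm `|f|_{L,β} = sup |f| + L^β * [f]_β`. -/
noncomputable def sHolderNorm (d : ℕ) (L β : ℝ) (f : EuclideanSpace ℝ (Fin d) → ℝ) : ℝ :=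
  supAbs f + L ^ β * holderSemi β f

theorem scaled_holder_norm_extension
    (d : ℕ) (hd : 1 ≤ d) (β L : ℝ) (hβ0 : 0 < β) (hβ1 : β ≤ 1) (hL : 0 < L)
    {I : Type*} (x : I → EuclideanSpace ℝ (Fin d))
    (f : EuclideanSpace ℝ (Fin d) → ℝ) (g : I → EuclideanSpace ℝ (Fin d) → ℝ)
    (hgb : ∀ i, ∃ M, ∀ y, |g i y| ≤ M)
    (hgh : ∀ i, ∃ H, ∀ y z, |g i y - g i z| ≤ H * ‖y - z‖ ^ β)
    (heq : ∀ i, Set.EqOn f (g i) (Metric.ball (x i) (20 * Real.sqrt d * L)))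
    (hsupp : closure (Function.support f) ⊆ ⋃ i, Metric.ball (x i) (10 * Real.sqrt d * L))
    (S : ℝ) (hS : 0 ≤ S)
    (hgS : ∀ i, sHolderNorm d L β (g i) ≤ S) :
    sHolderNorm d L β f ≤ 3 * S := by
  have hsd : (1:ℝ) ≤ Real.sqrt d := by
    rw [show (1:ℝ) = Real.sqrt 1 by simp]
    exact Real.sqrt_le_sqrt (by exact_mod_cast hd)
  have hLβ : (0:ℝ) < L ^ β := Real.rpow_pos_of_pos hL β
  haveI : Nonempty {p : EuclideanSpace ℝ (Fin d) × EuclideanSpace ℝ (Fin d) // p.1 ≠ p.2} := by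
    refine ⟨⟨(0, EuclideanSpace.single ⟨0, hd⟩ 1), fun h => ?_⟩⟩
    have := congrArg (fun v : EuclideanSpace ℝ (Fin d) => v ⟨0, hd⟩) h
    simp [EuclideanSpace.single_apply] at this
  -- nonnegativity facts
  have hgsup_nonneg : ∀ i, 0 ≤ supAbs (g i) :=
    fun i => Real.iSup_nonneg fun y => abs_nonneg _
  have hgsemi_nonneg : ∀ i, 0 ≤ holderSemi β (g i) :=
    fun i => Real.iSup_nonneg fun p => by positivity
  -- |g i| ≤ S pointwise
  have hgabs : ∀ i y, |g i y| ≤ S := by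
    intro i y
    obtain ⟨M, hM⟩ := hgb i
    have h1 : |g i y| ≤ supAbs (g i) :=
      le_ciSup ⟨M, by rintro _ ⟨z, rfl⟩; exact hM z⟩ y
    have h3 := hgS i
    unfold sHolderNorm at h3
    nlinarith [mul_nonneg hLβ.le (hgsemi_nonneg i)]
  -- Hölder bound for g i
  have hgholder : ∀ i y z, |g i y - g i z| ≤ (S / L ^ β) * ‖y - z‖ ^ β := by
    intro i y z
    rcases eq_or_ne y z with rfl | hyz
    · simp
      positivity
    · have hpos : (0:ℝ) < ‖y - z‖ ^ β :=
        Real.rpow_pos_of_pos (by rwa [norm_pos_iff, sub_ne_zero]) β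
      obtain ⟨H, hH⟩ := hgh i
      have hbdd : BddAbove (Set.range fun p :
          {p : EuclideanSpace ℝ (Fin d) × EuclideanSpace ℝ (Fin d) // p.1 ≠ p.2} =>
          |g i p.1.1 - g i p.1.2| / ‖p.1.1 - p.1.2‖ ^ β) := by
        refine ⟨max H 0, ?_⟩
        rintro _ ⟨⟨⟨a, b⟩, hab⟩, rfl⟩
        have hab' : (0:ℝ) < ‖a - b‖ ^ β :=
          Real.rpow_pos_of_pos (by rwa [norm_pos_iff, sub_ne_zero]) β
        rw [div_le_iff₀ hab']
        calc |g i a - g i b| ≤ H * ‖a - b‖ ^ β := hH a b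
          _ ≤ max H 0 * ‖a - b‖ ^ β := by
              gcongr; exact le_max_left _ _
      have h1 : |g i y - g i z| / ‖y - z‖ ^ β ≤ holderSemi β (g i) :=
        le_ciSup hbdd ⟨(y, z), hyz⟩
      have h2 : holderSemi β (g i) ≤ S / L ^ β := by
        rw [le_div_iff₀ hLβ]
        have h3 := hgS i
        unfold sHolderNorm at h3
        nlinarith [hgsup_nonneg i]
      rw [div_le_iff₀ hpos] at h1
      calc |g i y - g i z| ≤ holderSemi β (g i) * ‖y - z‖ ^ β := h1
        _ ≤ (S / L ^ β) * ‖y - z‖ ^ β := by gcongr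
  -- |f| ≤ S pointwise
  have hfabs : ∀ y, |f y| ≤ S := by
    intro y
    by_cases hy : f y = 0
    · rw [hy]; simpa using hS
    · have hy' : y ∈ closure (Function.support f) := subset_closure hy
      obtain ⟨i, hi⟩ := Set.mem_iUnion.1 (hsupp hy')
      have hy20 : y ∈ Metric.ball (x i) (20 * Real.sqrt d * L) := by
        rw [Metric.mem_ball] at hi ⊢
        nlinarith
      rw [heq i hy20]
      exact hgabs i y
  -- key same-ball lemma
  have key : ∀ y z, f y ≠ 0 → ‖y - z‖ < L →
      |f y - f z| ≤ (S / L ^ β) * ‖y - z‖ ^ β := by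
    intro y z hy hyz
    have hy' : y ∈ closure (Function.support f) := subset_closure hy
    obtain ⟨i, hi⟩ := Set.mem_iUnion.1 (hsupp hy')
    rw [Metric.mem_ball] at hi
    have hy20 : y ∈ Metric.ball (x i) (20 * Real.sqrt d * L) := by
      rw [Metric.mem_ball]
      nlinarith
    have hz20 : z ∈ Metric.ball (x i) (20 * Real.sqrt d * L) := by
      rw [Metric.mem_ball]
      have h1 : dist z (x i) ≤ dist z y + dist y (x i) := dist_triangle _ _ _
      have h2 : dist z y = ‖y - z‖ := by rw [dist_eq_norm, norm_sub_rev]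
      nlinarith
    rw [heq i hy20, heq i hz20]
    exact hgholder i y z
  -- Hölder bound for f
  have hfh : ∀ y z, |f y - f z| ≤ (2 * S / L ^ β) * ‖y - z‖ ^ β := by
    intro y z
    by_cases h : L ≤ ‖y - z‖
    · have h1 : |f y - f z| ≤ 2 * S := by
        calc |f y - f z| ≤ |f y| + |f z| := abs_sub _ _
          _ ≤ S + S := add_le_add (hfabs y) (hfabs z)
          _ = 2 * S := by ring
      have h3 : L ^ β ≤ ‖y - z‖ ^ β := Real.rpow_le_rpow hL.le h hβ0.le
      rw [div_mul_eq_mul_div, le_div_iff₀ hLβ]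
      nlinarith [abs_nonneg (f y - f z)]
    · push_neg at h
      by_cases hy : f y = 0
      · by_cases hz : f z = 0
        · rw [hy, hz]
          simp
          positivity
        · have := key z y hz (by rwa [norm_sub_rev])
          rw [abs_sub_comm, norm_sub_rev] at this
          calc |f y - f z| ≤ (S / L ^ β) * ‖y - z‖ ^ β := this
            _ ≤ (2 * S / L ^ β) * ‖y - z‖ ^ β := by
                gcongr <;> linarith
      · calc |f y - f z| ≤ (S / L ^ β) * ‖y - z‖ ^ β := key y z hy h
          _ ≤ (2 * S / L ^ β) * ‖y - z‖ ^ β := by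
              gcongr <;> linarith
  -- combine
  have hsup : supAbs f ≤ S := ciSup_le hfabs
  have hsemi : holderSemi β f ≤ 2 * S / L ^ β := by
    refine ciSup_le fun p => ?_
    have hpos : (0:ℝ) < ‖p.1.1 - p.1.2‖ ^ β :=
      Real.rpow_pos_of_pos (by rw [norm_pos_iff, sub_ne_zero]; exact p.2) β
    rw [div_le_iff₀ hpos]
    exact hfh p.1.1 p.1.2
  unfold sHolderNorm
  have h4 : L ^ β * (2 * S / L ^ β) = 2 * S := by field_simp
  have h5 : L ^ β * holderSemi β f ≤ 2 * S := by
    calc L ^ β * holderSemi β f ≤ L ^ β * (2 * S / L ^ β) := by gcongr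
      _ = 2 * S := h4
  linarith
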